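/- Let F_q be a finite field of characteristic p ≥ 3 and u, v ∈ F_q \ {0,1}. The Legendre curves E_{L,u}: Y^2 = X(X-1)(X-u) and E_{L,v}: Y^2 = X(X-1)(X-v) are isomorphic over F_q if and only if one of the following holds: (1) v = u; (2) v = 1/u and u is a square in F_q; (3) v = 1-u and -1 is a square; (4) v = 1/(1-u) and u-1 is a square; (5) v = (u-1)/u and -u is a square; (6) v = u/(u-1) and 1-u is a square. -/

import Mathlib

/-- `F_q`-isomorphism of Legendre curves `Y² = X(X-1)(X-u)`: there is an admissible change of
variables `X ↦ α²X̃ + β` carrying the root set `{0, 1, u}` onto `{0, 1, v}` (after scaling). -/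
def LegendreIso (F : Type*) [Field F] (u v : F) : Prop :=
  ∃ α β : F, α ≠ 0 ∧
    ({-β / α ^ 2, (1 - β) / α ^ 2, (u - β) / α ^ 2} : Set F) = {0, 1, v}

/-- Criterion for two Legendre curves over a finite field of odd characteristic to be
isomorphic over the ground field. -/
theorem legendre_iso_iff
    (F : Type*) [Field F] [Fintype F] (p : ℕ) [Fact p.Prime] [CharP F p] (hp : 3 ≤ p)
    (u v : F) (hu0 : u ≠ 0) (hu1 : u ≠ 1) (hv0 : v ≠ 0) (hv1 : v ≠ 1) :
    LegendreIso F u v ↔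
      v = u ∨
      (v = 1 / u ∧ IsSquare u) ∨
      (v = 1 - u ∧ IsSquare (-1 : F)) ∨
      (v = 1 / (1 - u) ∧ IsSquare (u - 1)) ∨
      (v = (u - 1) / u ∧ IsSquare (-u)) ∨
      (v = u / (u - 1) ∧ IsSquare (1 - u)) := by
  have hu1' : u - 1 ≠ 0 := sub_ne_zero.mpr hu1
  have h1u : (1 : F) - u ≠ 0 := sub_ne_zero.mpr (Ne.symm hu1)
  constructor
  · rintro ⟨α, β, hα, hset⟩
    have hα2 : (α : F) ^ 2 ≠ 0 := pow_ne_zero 2 hα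
    have e0 : -β / α ^ 2 = 0 ∨ -β / α ^ 2 = 1 ∨ -β / α ^ 2 = v := by
      have : -β / α ^ 2 ∈ ({0, 1, v} : Set F) := by rw [← hset]; simp
      simpa using this
    have e1 : (1 - β) / α ^ 2 = 0 ∨ (1 - β) / α ^ 2 = 1 ∨ (1 - β) / α ^ 2 = v := by
      have : (1 - β) / α ^ 2 ∈ ({0, 1, v} : Set F) := by rw [← hset]; simp
      simpa using this
    have hm0 : (0 : F) = -β / α ^ 2 ∨ (0 : F) = (1 - β) / α ^ 2 ∨ (0 : F) = (u - β) / α ^ 2 := by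
      have : (0 : F) ∈ ({-β / α ^ 2, (1 - β) / α ^ 2, (u - β) / α ^ 2} : Set F) := by
        rw [hset]; simp
      simpa using this
    have hm1 : (1 : F) = -β / α ^ 2 ∨ (1 : F) = (1 - β) / α ^ 2 ∨ (1 : F) = (u - β) / α ^ 2 := by
      have : (1 : F) ∈ ({-β / α ^ 2, (1 - β) / α ^ 2, (u - β) / α ^ 2} : Set F) := by
        rw [hset]; simp
      simpa using this
    have hmv : v = -β / α ^ 2 ∨ v = (1 - β) / α ^ 2 ∨ v = (u - β) / α ^ 2 := by
      have : v ∈ ({-β / α ^ 2, (1 - β) / α ^ 2, (u - β) / α ^ 2} : Set F) := by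
        rw [hset]; simp
      simpa using this
    simp only [div_eq_iff hα2] at e0 e1
    rcases e0 with e0 | e0 | e0 <;> rcases e1 with e1 | e1 | e1
    · exact absurd (show (1 : F) = 0 by linear_combination e1 - e0) one_ne_zero
    · -- (0,1,v) : v = u
      rcases hmv with h | h | h
      · exact absurd (show v = 0 by rw [h, div_eq_iff hα2]; linear_combination e0) hv0
      · exact absurd (show v = 1 by rw [h, div_eq_iff hα2]; linear_combination e1) hv1
      · rw [eq_div_iff hα2] at h
        have hβ : β = 0 := by linear_combination -e0
        have hA : α ^ 2 = 1 := by linear_combination e0 - e1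
        exact Or.inl (by linear_combination h - v * hA - hβ)
    · -- (0,v,1) : v = 1/u, u square
      rcases hm1 with h | h | h
      · rw [eq_div_iff hα2] at h
        exact absurd (show α ^ 2 = 0 by linear_combination h + e0) hα2
      · rw [eq_div_iff hα2] at h
        have h2 : (1 - v) * α ^ 2 = 0 := by linear_combination h + e1
        rcases mul_eq_zero.mp h2 with h3 | h3
        · exact absurd (show v = 1 by linear_combination -h3) hv1
        · exact absurd h3 hα2
      · rw [eq_div_iff hα2] at h
        have hβ : β = 0 := by linear_combination -e0
        have hA : α ^ 2 = u := by linear_combination h + e0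
        refine Or.inr (Or.inl ⟨?_, α, by linear_combination -hA⟩)
        rw [eq_div_iff hu0]
        linear_combination -e1 - hβ - v * hA
    · -- (1,0,v) : v = 1-u, -1 square
      rcases hmv with h | h | h
      · exact absurd (show v = 1 by rw [h, div_eq_iff hα2]; linear_combination e0) hv1
      · exact absurd (show v = 0 by rw [h, div_eq_iff hα2]; linear_combination e1) hv0
      · rw [eq_div_iff hα2] at h
        have hβ : β = 1 := by linear_combination -e1
        have hA : α ^ 2 = -1 := by linear_combination e1 - e0
        exact Or.inr (Or.inr (Or.inl ⟨by linear_combination -h + v * hA + hβ,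
          α, by linear_combination -hA⟩))
    · exact absurd (show (1 : F) = 0 by linear_combination e1 - e0) one_ne_zero
    · -- (1,v,0) : v = (u-1)/u, -u square
      rcases hm0 with h | h | h
      · rw [eq_div_iff hα2] at h
        exact absurd (show α ^ 2 = 0 by linear_combination -e0 - h) hα2
      · rw [eq_div_iff hα2] at h
        have h2 : v * α ^ 2 = 0 := by linear_combination -h - e1
        rcases mul_eq_zero.mp h2 with h3 | h3
        · exact absurd h3 hv0
        · exact absurd h3 hα2
      · rw [eq_div_iff hα2] at h
        have hβ : β = u := by linear_combination h
        have hA : α ^ 2 = -u := by linear_combination -e0 - h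
        refine Or.inr (Or.inr (Or.inr (Or.inr (Or.inl ⟨?_, α, by linear_combination -hA⟩))))
        rw [eq_div_iff hu0]
        linear_combination e1 + hβ + v * hA
    · -- (v,0,1) : v = 1/(1-u), u-1 square
      rcases hm1 with h | h | h
      · rw [eq_div_iff hα2] at h
        have h2 : (1 - v) * α ^ 2 = 0 := by linear_combination h + e0
        rcases mul_eq_zero.mp h2 with h3 | h3
        · exact absurd (show v = 1 by linear_combination -h3) hv1
        · exact absurd h3 hα2
      · rw [eq_div_iff hα2] at h
        exact absurd (show α ^ 2 = 0 by linear_combination h + e1) hα2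
      · rw [eq_div_iff hα2] at h
        have hβ : β = 1 := by linear_combination -e1
        have hA : α ^ 2 = u - 1 := by linear_combination h + e1
        refine Or.inr (Or.inr (Or.inr (Or.inl ⟨?_, α, by linear_combination -hA⟩)))
        rw [eq_div_iff h1u]
        linear_combination e0 + hβ + v * hA
    · -- (v,1,0) : v = u/(u-1), 1-u square
      rcases hm0 with h | h | h
      · rw [eq_div_iff hα2] at h
        have h2 : v * α ^ 2 = 0 := by linear_combination -h - e0
        rcases mul_eq_zero.mp h2 with h3 | h3
        · exact absurd h3 hv0
        · exact absurd h3 hα2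
      · rw [eq_div_iff hα2] at h
        exact absurd (show α ^ 2 = 0 by linear_combination -h - e1) hα2
      · rw [eq_div_iff hα2] at h
        have hβ : β = u := by linear_combination h
        have hA : α ^ 2 = 1 - u := by linear_combination -e1 - h
        refine Or.inr (Or.inr (Or.inr (Or.inr (Or.inr ⟨?_, α, by linear_combination -hA⟩))))
        rw [eq_div_iff hu1']
        linear_combination e0 + hβ + v * hA
    · exact absurd (show (1 : F) = 0 by linear_combination e1 - e0) one_ne_zero
  · rintro (h | ⟨h, α, hs⟩ | ⟨h, α, hs⟩ | ⟨h, α, hs⟩ | ⟨h, α, hs⟩ | ⟨h, α, hs⟩)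
    · -- v = u
      refine ⟨1, 0, one_ne_zero, ?_⟩
      rw [h]; norm_num
    · -- v = 1/u, u = α*α
      have hα : α ≠ 0 := by rintro rfl; rw [mul_zero] at hs; exact hu0 hs
      have hA : α ^ 2 = u := by rw [sq]; exact hs.symm
      refine ⟨α, 0, hα, ?_⟩
      have c0 : -0 / α ^ 2 = (0 : F) := by simp
      have c1 : ((1 : F) - 0) / α ^ 2 = v := by rw [hA, h]; norm_num
      have c2 : (u - 0) / α ^ 2 = 1 := by rw [hA]; field_simp; ring
      rw [c0, c1, c2]
      ext x; simp only [Set.mem_insert_iff, Set.mem_singleton_iff]; tauto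
    · -- v = 1-u, -1 = α*α
      have hα : α ≠ 0 := by
        rintro rfl; rw [mul_zero] at hs
        exact absurd (show (1 : F) = 0 by linear_combination -hs) one_ne_zero
      have hA : α ^ 2 = -1 := by rw [sq]; exact hs.symm
      refine ⟨α, 1, hα, ?_⟩
      have c0 : -1 / α ^ 2 = (1 : F) := by rw [hA]; norm_num
      have c1 : ((1 : F) - 1) / α ^ 2 = 0 := by simp
      have c2 : (u - 1) / α ^ 2 = v := by rw [hA, h]; field_simp; ring
      rw [c0, c1, c2]
      ext x; simp only [Set.mem_insert_iff, Set.mem_singleton_iff]; tauto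
    · -- v = 1/(1-u), u-1 = α*α
      have hα : α ≠ 0 := by rintro rfl; rw [mul_zero] at hs; exact hu1' hs
      have hA : α ^ 2 = u - 1 := by rw [sq]; exact hs.symm
      refine ⟨α, 1, hα, ?_⟩
      have c0 : -1 / α ^ 2 = v := by
        rw [hA, h]; rw [div_eq_div_iff hu1' h1u]; ring
      have c1 : ((1 : F) - 1) / α ^ 2 = 0 := by simp
      have c2 : (u - 1) / α ^ 2 = 1 := by rw [hA]; exact div_self hu1'
      rw [c0, c1, c2]
      ext x; simp only [Set.mem_insert_iff, Set.mem_singleton_iff]; tauto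
    · -- v = (u-1)/u, -u = α*α
      have hα : α ≠ 0 := by
        rintro rfl; rw [mul_zero] at hs
        exact hu0 (by linear_combination -hs)
      have hA : α ^ 2 = -u := by rw [sq]; exact hs.symm
      have hnu : -u ≠ 0 := neg_ne_zero.mpr hu0
      refine ⟨α, u, hα, ?_⟩
      have c0 : -u / α ^ 2 = (1 : F) := by rw [hA]; exact div_self hnu
      have c1 : ((1 : F) - u) / α ^ 2 = v := by
        rw [hA, h]; rw [div_eq_div_iff hnu hu0]; ring
      have c2 : (u - u) / α ^ 2 = 0 := by simp
      rw [c0, c1, c2]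
      ext x; simp only [Set.mem_insert_iff, Set.mem_singleton_iff]; tauto
    · -- v = u/(u-1), 1-u = α*α
      have hα : α ≠ 0 := by rintro rfl; rw [mul_zero] at hs; exact h1u hs
      have hA : α ^ 2 = 1 - u := by rw [sq]; exact hs.symm
      refine ⟨α, u, hα, ?_⟩
      have c0 : -u / α ^ 2 = v := by
        rw [hA, h]; rw [div_eq_div_iff h1u hu1']; ring
      have c1 : ((1 : F) - u) / α ^ 2 = 1 := by rw [hA]; exact div_self h1u
      have c2 : (u - u) / α ^ 2 = 0 := by simp
      rw [c0, c1, c2]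
      ext x; simp only [Set.mem_insert_iff, Set.mem_singleton_iff]; tauto
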